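/- For a finite closure system (X, φ) with closed sets F and quasi-closed sets 𝒬, the family F ∪ 𝒬 is closed under pairwise intersection (and contains X), hence is the closed-set family of a closure operator σ on X. -/

import Mathlib

variable {X : Type*}

/-- A closure operator: extensive, monotone, idempotent. -/
def IsClosureOp (φ : Set X → Set X) : Prop :=
  (∀ A, A ⊆ φ A) ∧ (∀ A B : Set X, A ⊆ B → φ A ⊆ φ B) ∧ (∀ A, φ (φ A) = φ A)

/-- `S` obeys an implication `(A, B)` iff `A ⊆ S → B ⊆ S`. -/
def Obeys (S : Set X) (p : Set X × Set X) : Prop := p.1 ⊆ S → p.2 ⊆ S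

/-- Family of sets obeying every implication in `Sig`. -/
def ObeyFam (Sig : Set (Set X × Set X)) : Set (Set X) := {S | ∀ p ∈ Sig, Obeys S p}

/-- Family of `φ`-closed sets. -/
def ClosedFam (φ : Set X → Set X) : Set (Set X) := {S | φ S = S}

/-- `Q` is quasi-closed for `φ`. -/
def QuasiClosed (φ : Set X → Set X) (Q : Set X) : Prop :=
  Q ∉ ClosedFam φ ∧ ∀ S ∈ ClosedFam φ, Q ⊆ S ∨ Q ∩ S ∈ ClosedFam φ

lemma sInter_mem_of_finite (G : Set (Set X)) (hu : Set.univ ∈ G)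
    (hi : ∀ S ∈ G, ∀ T ∈ G, S ∩ T ∈ G) (T : Set (Set X)) (hfin : T.Finite) :
    T ⊆ G → ⋂₀ T ∈ G := by
  refine Set.Finite.induction_on T hfin (fun _ => by simpa using hu) ?_
  intro S T' _ hTfin ih hT
  rw [Set.sInter_insert]
  exact hi _ (hT (Set.mem_insert _ _)) _ (ih fun x hx => hT (Set.mem_insert_of_mem _ hx))

lemma inter_closed (φ : Set X → Set X) (hφ : IsClosureOp φ)
    {S T : Set X} (hS : S ∈ ClosedFam φ) (hT : T ∈ ClosedFam φ) :
    S ∩ T ∈ ClosedFam φ := by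
  obtain ⟨hext, hmono, _⟩ := hφ
  refine subset_antisymm (Set.subset_inter ?_ ?_) (hext _)
  · exact (hmono _ _ Set.inter_subset_left).trans hS.subset
  · exact (hmono _ _ Set.inter_subset_right).trans hT.subset

theorem stmt14 [Finite X] (φ : Set X → Set X) (hφ : IsClosureOp φ) :
    Set.univ ∈ ClosedFam φ ∪ {Q | QuasiClosed φ Q} ∧
    (∀ S ∈ ClosedFam φ ∪ {Q | QuasiClosed φ Q},
      ∀ T ∈ ClosedFam φ ∪ {Q | QuasiClosed φ Q},
        S ∩ T ∈ ClosedFam φ ∪ {Q | QuasiClosed φ Q}) ∧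
    ∃ σ : Set X → Set X, IsClosureOp σ ∧
      ClosedFam σ = ClosedFam φ ∪ {Q | QuasiClosed φ Q} := by
  obtain ⟨hext, hmono, hidem⟩ := hφ
  set G := ClosedFam φ ∪ {Q | QuasiClosed φ Q} with hG
  -- univ ∈ G
  have huniv : Set.univ ∈ G :=
    Or.inl (subset_antisymm (Set.subset_univ _) (hext _))
  -- quasi ∩ closed ∈ G
  have hqc : ∀ Q S : Set X, QuasiClosed φ Q → S ∈ ClosedFam φ → Q ∩ S ∈ G := by
    intro Q S hQ hS
    rcases hQ.2 S hS with h | h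
    · rw [Set.inter_eq_left.2 h]; exact Or.inr hQ
    · exact Or.inl h
  -- pairwise intersection
  have hinter : ∀ S ∈ G, ∀ T ∈ G, S ∩ T ∈ G := by
    intro S hS T hT
    rcases hS with hS | hS
    · rcases hT with hT | hT
      · exact Or.inl (inter_closed φ ⟨hext, hmono, hidem⟩ hS hT)
      · rw [Set.inter_comm]; exact hqc T S hT hS
    · rcases hT with hT | hT
      · exact hqc S T hS hT
      · -- both quasi-closed
        by_cases hcl : S ∩ T ∈ ClosedFam φ
        · exact Or.inl hcl
        refine Or.inr ⟨hcl, ?_⟩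
        intro R hR
        rcases hS.2 R hR with h1 | h1
        · rcases hT.2 R hR with h2 | h2
          · exact Or.inl (fun x hx => h1 hx.1)
          · rcases hS.2 _ h2 with h3 | h3
            · exact Or.inl (fun x hx => (h3 hx.1).2)
            · have : S ∩ T ∩ R = S ∩ (T ∩ R) := by rw [Set.inter_assoc]
              rw [this]; exact Or.inr h3
        · -- S ∩ R closed
          rcases hT.2 _ h1 with h3 | h3
          · exact Or.inl (fun x hx => (h3 hx.2).2)
          · have : S ∩ T ∩ R = T ∩ (S ∩ R) := by
              ext x; constructor
              · rintro ⟨⟨h, h'⟩, h''⟩; exact ⟨h', h, h''⟩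
              · rintro ⟨h', h, h''⟩; exact ⟨⟨h, h'⟩, h''⟩
            rw [this]; exact Or.inr h3
  refine ⟨huniv, hinter, ?_⟩
  -- closure operator from intersection-closed family
  set σ : Set X → Set X := fun A => ⋂₀ {S ∈ G | A ⊆ S} with hσ
  have hσmem : ∀ A, σ A ∈ G := by
    intro A
    exact sInter_mem_of_finite G huniv hinter _ (Set.toFinite _) (fun S hS => hS.1)
  have hσext : ∀ A, A ⊆ σ A := fun A x hx => by
    intro S hS; exact hS.2 hx
  have hσmono : ∀ A B : Set X, A ⊆ B → σ A ⊆ σ B := by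
    intro A B hAB x hx S hS
    exact hx S ⟨hS.1, hAB.trans hS.2⟩
  have hσle : ∀ A S, S ∈ G → A ⊆ S → σ A ⊆ S := by
    intro A S hSG hAS x hx
    exact hx S ⟨hSG, hAS⟩
  refine ⟨σ, ⟨hσext, hσmono, ?_⟩, ?_⟩
  · intro A
    exact subset_antisymm (hσle _ _ (hσmem A) subset_rfl) (hσext _)
  · ext S
    constructor
    · intro h
      have : σ S = S := h
      rw [← this]; exact hσmem S
    · intro h
      exact subset_antisymm (hσle _ _ h subset_rfl) (hσext _)
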